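/- Linear convergence of VR-SGD (Option I, strongly convex): Under L-smoothness of each f_i, μ-strong convexity of F, the assumption E[F(x_0^s) − F(x*)] ≤ c·E[F(x̃^{s−1}) − F(x*)], and step η < 1/(3L), if ρ_I := (2Lη(m+c))/(m(1−3Lη)) + (c(1−Lη))/(m μ η(1−3Lη)) < 1, then E[F(x̂^S) − F(x*)] ≤ ρ_I^S (F(x̃^0) − F(x*)). -/

import Mathlib

open scoped BigOperators RealInnerProductSpace


section Helpers

variable {E : Type*} [NormedAddCommGroup E] [InnerProductSpace ℝ E] [CompleteSpace E]

/-- limit of (1-t)*A as t→0+ gives A ≤ B -/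
lemma aux_limit_le {A B : ℝ} (h : ∀ t : ℝ, t ∈ Set.Ioo (0:ℝ) 1 → (1 - t) * A ≤ B) : A ≤ B := by
  have h1 : Filter.Tendsto (fun t : ℝ => (1 - t) * A) (nhdsWithin 0 (Set.Ioi 0)) (nhds A) := by
    have : Filter.Tendsto (fun t : ℝ => (1 - t) * A) (nhds 0) (nhds ((1 - 0) * A)) :=
      ((continuous_const.sub continuous_id).mul continuous_const).tendsto 0
    simpa using this.mono_left nhdsWithin_le_nhds
  refine le_of_tendsto h1 ?_
  filter_upwards [Ioo_mem_nhdsGT_of_mem (Set.left_mem_Ico.2 one_pos)] with t ht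
  exact h t ht

/-- directional slope limit -/
lemma aux_dir_slope (f : E → ℝ) (x u : E) (hf : DifferentiableAt ℝ f x) :
    Filter.Tendsto (fun t : ℝ => (f (x + t • u) - f x) / t) (nhdsWithin 0 (Set.Ioi 0))
      (nhds ⟪gradient f x, u⟫) := by
  have hgrad := hf.hasGradientAt.hasFDerivAt
  have hline : HasDerivAt (fun t : ℝ => x + t • u) u 0 := by
    simpa using ((hasDerivAt_id (0:ℝ)).smul_const u).const_add x
  have hcomp : HasDerivAt (fun t : ℝ => f (x + t • u)) ⟪gradient f x, u⟫ 0 := by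
    have h0 : x = x + (0:ℝ) • u := by simp
    rw [h0] at hgrad
    simpa [Function.comp_def] using hgrad.comp_hasDerivAt 0 hline
  have := hasDerivAt_iff_tendsto_slope.1 hcomp
  have h2 : Filter.Tendsto (slope (fun t : ℝ => f (x + t • u)) 0) (nhdsWithin 0 (Set.Ioi 0))
      (nhds ⟪gradient f x, u⟫) :=
    this.mono_left (nhdsWithin_mono _ (fun t ht => by simpa using ne_of_gt ht))
  refine h2.congr (fun t => ?_)
  simp [slope, div_eq_inv_mul]

/-- convex differentiable gradient inequality -/
lemma aux_convex_grad (f : E → ℝ) (hconv : ConvexOn ℝ Set.univ f) (hdiff : Differentiable ℝ f)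
    (x y : E) : f x + ⟪gradient f x, y - x⟫ ≤ f y := by
  have hslope := aux_dir_slope f x (y - x) (hdiff x)
  have hle : ⟪gradient f x, y - x⟫ ≤ f y - f x := by
    refine le_of_tendsto hslope ?_
    filter_upwards [Ioo_mem_nhdsGT_of_mem (Set.left_mem_Ico.2 one_pos)] with t ht
    have hxt : x + t • (y - x) = (1 - t) • x + t • y := by module
    have hc := hconv.2 (Set.mem_univ x) (Set.mem_univ y) (by linarith [ht.1, ht.2] : (0:ℝ) ≤ 1 - t)
      ht.1.le (by ring)
    rw [hxt]
    rw [div_le_iff₀ ht.1]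
    calc f ((1-t) • x + t • y) - f x ≤ (1-t) * f x + t * f y - f x := by
          simpa [smul_eq_mul] using sub_le_sub_right hc (f x)
      _ = (f y - f x) * t := by ring
  linarith

/-- optimality of minimizer of f+g, g convex: directional inequality -/
lemma aux_min_dir (f : E → ℝ) (g : E → ℝ) (hdiff : Differentiable ℝ f)
    (hgconv : ConvexOn ℝ Set.univ g) (xs : E) (hmin : ∀ z, f xs + g xs ≤ f z + g z) (y : E) :
    g xs - g y ≤ ⟪gradient f xs, y - xs⟫ := by
  have hslope := aux_dir_slope f xs (y - xs) (hdiff xs)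
  refine ge_of_tendsto hslope ?_
  filter_upwards [Ioo_mem_nhdsGT_of_mem (Set.left_mem_Ico.2 one_pos)] with t ht
  have hxt : xs + t • (y - xs) = (1 - t) • xs + t • y := by module
  have hg := hgconv.2 (Set.mem_univ xs) (Set.mem_univ y)
    (by linarith [ht.1, ht.2] : (0:ℝ) ≤ 1 - t) ht.1.le (by ring)
  have hm := hmin (xs + t • (y - xs))
  rw [le_div_iff₀ ht.1]
  have : g (xs + t • (y - xs)) ≤ (1 - t) * g xs + t * g y := by rw [hxt]; simpa using hg
  nlinarith [ht.1]

end Helpers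

section Helpers2

variable {E : Type*} [NormedAddCommGroup E] [InnerProductSpace ℝ E] [CompleteSpace E]

lemma aux_combo_sq (a b c : E) (t : ℝ) :
    ‖((1 - t) • a + t • b) - c‖ ^ 2
      = (1 - t) * ‖a - c‖ ^ 2 + t * ‖b - c‖ ^ 2 - t * (1 - t) * ‖a - b‖ ^ 2 := by
  have h : ((1 - t) • a + t • b) - c = (1 - t) • (a - c) + t • (b - c) := by module
  rw [h, ← real_inner_self_eq_norm_sq, ← real_inner_self_eq_norm_sq,
    ← real_inner_self_eq_norm_sq, ← real_inner_self_eq_norm_sq]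
  have hab : (a : E) - b = (a - c) - (b - c) := by abel
  rw [hab]
  simp only [inner_add_left, inner_add_right, inner_sub_left, inner_sub_right,
    real_inner_smul_left, real_inner_smul_right]
  simp only [real_inner_comm c a, real_inner_comm c b, real_inner_comm b a]
  ring

/-- strengthened prox inequality -/
lemma aux_prox_strong (g : E → ℝ) (hg : ConvexOn ℝ Set.univ g) (η : ℝ) (hη : 0 < η)
    (v xc w : E)
    (hmin : ∀ y, g w + ⟪v, w⟫ + 1 / (2 * η) * ‖w - xc‖ ^ 2
        ≤ g y + ⟪v, y⟫ + 1 / (2 * η) * ‖y - xc‖ ^ 2) (y : E) :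
    g w + ⟪v, w⟫ + 1 / (2 * η) * ‖w - xc‖ ^ 2 + 1 / (2 * η) * ‖y - w‖ ^ 2
      ≤ g y + ⟪v, y⟫ + 1 / (2 * η) * ‖y - xc‖ ^ 2 := by
  have key : ∀ t : ℝ, t ∈ Set.Ioo (0:ℝ) 1 →
      (1 - t) * (1 / (2 * η) * ‖y - w‖ ^ 2)
        ≤ (g y + ⟪v, y⟫ + 1 / (2 * η) * ‖y - xc‖ ^ 2)
          - (g w + ⟪v, w⟫ + 1 / (2 * η) * ‖w - xc‖ ^ 2) := by
    intro t ht
    have ht1 : 0 < t := ht.1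
    have hmz := hmin ((1 - t) • w + t • y)
    have hgz : g ((1 - t) • w + t • y) ≤ (1 - t) * g w + t * g y := by
      simpa [smul_eq_mul] using hg.2 (Set.mem_univ w) (Set.mem_univ y)
        (by linarith [ht.1, ht.2] : (0:ℝ) ≤ 1 - t) ht.1.le (by ring)
    have hiz : ⟪v, (1 - t) • w + t • y⟫ = (1 - t) * ⟪v, w⟫ + t * ⟪v, y⟫ := by
      simp [inner_add_right, real_inner_smul_right]
    have hqz : ‖((1 - t) • w + t • y) - xc‖ ^ 2
        = (1 - t) * ‖w - xc‖ ^ 2 + t * ‖y - xc‖ ^ 2 - t * (1 - t) * ‖w - y‖ ^ 2 :=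
      aux_combo_sq w y xc t
    have hyw : ‖w - y‖ ^ 2 = ‖y - w‖ ^ 2 := by rw [norm_sub_rev]
    rw [hqz, hyw, hiz] at hmz
    have h2 : t * ((1 - t) * (1 / (2 * η) * ‖y - w‖ ^ 2))
        ≤ t * ((g y + ⟪v, y⟫ + 1 / (2 * η) * ‖y - xc‖ ^ 2)
          - (g w + ⟪v, w⟫ + 1 / (2 * η) * ‖w - xc‖ ^ 2)) := by nlinarith [hmz, hgz]
    exact (mul_le_mul_iff_of_pos_left ht1).1 h2
  linarith [aux_limit_le key]

/-- uniqueness of prox minimizer -/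
lemma aux_prox_unique (g : E → ℝ) (hg : ConvexOn ℝ Set.univ g) (η : ℝ) (hη : 0 < η)
    (v xc w w' : E)
    (hmin : ∀ y, g w + ⟪v, w⟫ + 1 / (2 * η) * ‖w - xc‖ ^ 2
        ≤ g y + ⟪v, y⟫ + 1 / (2 * η) * ‖y - xc‖ ^ 2)
    (hmin' : ∀ y, g w' + ⟪v, w'⟫ + 1 / (2 * η) * ‖w' - xc‖ ^ 2
        ≤ g y + ⟪v, y⟫ + 1 / (2 * η) * ‖y - xc‖ ^ 2) : w = w' := by
  have h1 := aux_prox_strong g hg η hη v xc w hmin w'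
  have h2 := hmin' w
  have hq : 0 < 1 / (2 * η) := by positivity
  have : ‖w' - w‖ ^ 2 ≤ 0 := by nlinarith [h1, h2]
  have h0 : ‖w' - w‖ = 0 := by nlinarith [norm_nonneg (w' - w), sq_nonneg ‖w' - w‖]
  have := norm_eq_zero.1 h0
  symm; rwa [sub_eq_zero] at this

/-- Young's inequality for inner products -/
lemma aux_young (u w : E) (ε : ℝ) (hε : 0 < ε) :
    ⟪u, w⟫ ≤ ε / 2 * ‖u‖ ^ 2 + 1 / (2 * ε) * ‖w‖ ^ 2 := by
  have h := norm_sub_sq_real (ε • u) w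
  have h0 : (0:ℝ) ≤ ‖ε • u - w‖ ^ 2 := sq_nonneg _
  rw [norm_smul, real_inner_smul_left] at h
  have hεn : ‖ε‖ = ε := abs_of_pos hε
  rw [hεn] at h
  have h2 : 0 ≤ (ε * ‖u‖) ^ 2 - 2 * (ε * ⟪u, w⟫) + ‖w‖ ^ 2 := h ▸ h0
  have hgoal : ε * ⟪u, w⟫ ≤ ε ^ 2 / 2 * ‖u‖ ^ 2 + 1 / 2 * ‖w‖ ^ 2 := by nlinarith [h2]
  have heq : ε * (ε / 2 * ‖u‖ ^ 2 + 1 / (2 * ε) * ‖w‖ ^ 2)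
      = ε ^ 2 / 2 * ‖u‖ ^ 2 + 1 / 2 * ‖w‖ ^ 2 := by field_simp
  rw [← heq] at hgoal
  exact (mul_le_mul_iff_of_pos_left hε).1 hgoal

/-- strong convexity quadratic growth at the minimizer -/
lemma aux_strong_growth (F : E → ℝ) (μ : ℝ) (hμ : 0 < μ) (hsc : StrongConvexOn Set.univ μ F)
    (xs : E) (hmin : ∀ z, F xs ≤ F z) (z : E) :
    μ / 2 * ‖z - xs‖ ^ 2 ≤ F z - F xs := by
  have key : ∀ t : ℝ, t ∈ Set.Ioo (0:ℝ) 1 → (1 - t) * (μ / 2 * ‖z - xs‖ ^ 2) ≤ F z - F xs := by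
    intro t ht
    have ht1 : 0 < t := ht.1
    have h := hsc.2 (Set.mem_univ xs) (Set.mem_univ z)
      (by linarith [ht.1, ht.2] : (0:ℝ) ≤ 1 - t) ht.1.le (by ring)
    have hm := hmin ((1 - t) • xs + t • z)
    have hn : ‖xs - z‖ = ‖z - xs‖ := norm_sub_rev _ _
    rw [hn] at h
    simp only [smul_eq_mul] at h
    have h2 : t * ((1 - t) * (μ / 2 * ‖z - xs‖ ^ 2)) ≤ t * (F z - F xs) := by nlinarith
    exact (mul_le_mul_iff_of_pos_left ht1).1 h2
  exact aux_limit_le key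

end Helpers2

section Helpers3

variable {E : Type*} [NormedAddCommGroup E] [InnerProductSpace ℝ E] [CompleteSpace E]

/-- descent lemma for functions with Lipschitz gradient -/
lemma aux_descent (f : E → ℝ) (L : ℝ) (hL : 0 < L) (hdiff : Differentiable ℝ f)
    (hlip : ∀ a b, ‖gradient f a - gradient f b‖ ≤ L * ‖a - b‖) (x y : E) :
    f y ≤ f x + ⟪gradient f x, y - x⟫ + L / 2 * ‖y - x‖ ^ 2 := by
  set u := y - x with hu
  have hgc : Continuous (gradient f) := by
    have : LipschitzWith (Real.toNNReal L) (gradient f) := by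
      refine LipschitzWith.of_dist_le_mul fun a b => ?_
      rw [dist_eq_norm, dist_eq_norm]
      refine (hlip a b).trans ?_
      gcongr
      exact (Real.coe_toNNReal L hL.le).ge
    exact this.continuous
  have hline : ∀ t : ℝ, HasDerivAt (fun t : ℝ => f (x + t • u)) ⟪gradient f (x + t • u), u⟫ t := by
    intro t
    have hgrad := (hdiff (x + t • u)).hasGradientAt.hasFDerivAt
    have hl : HasDerivAt (fun s : ℝ => x + s • u) u t := by
      simpa using ((hasDerivAt_id t).smul_const u).const_add x
    simpa [Function.comp_def] using hgrad.comp_hasDerivAt t hl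
  have hcont : Continuous fun t : ℝ => ⟪gradient f (x + t • u), u⟫ := by
    exact (Continuous.inner (hgc.comp (by continuity)) continuous_const)
  have hint : IntervalIntegrable (fun t : ℝ => ⟪gradient f (x + t • u), u⟫)
      MeasureTheory.volume 0 1 := hcont.intervalIntegrable _ _
  have heq : ∫ t in (0:ℝ)..1, ⟪gradient f (x + t • u), u⟫ = f (x + (1:ℝ) • u) - f (x + (0:ℝ) • u) := by
    exact intervalIntegral.integral_eq_sub_of_hasDerivAt (fun t _ => hline t) hint
  have hbound : ∀ t ∈ Set.Icc (0:ℝ) 1,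
      ⟪gradient f (x + t • u), u⟫ ≤ ⟪gradient f x, u⟫ + L * ‖u‖ ^ 2 * t := by
    intro t ht
    have h1 : ⟪gradient f (x + t • u) - gradient f x, u⟫ ≤ ‖gradient f (x + t • u) - gradient f x‖ * ‖u‖ :=
      real_inner_le_norm _ _
    have h2 : ‖gradient f (x + t • u) - gradient f x‖ ≤ L * (t * ‖u‖) := by
      have := hlip (x + t • u) x
      simpa [norm_smul, abs_of_nonneg ht.1] using this
    have h3 : ⟪gradient f (x + t • u) - gradient f x, u⟫ ≤ L * ‖u‖ ^ 2 * t := by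
      calc ⟪gradient f (x + t • u) - gradient f x, u⟫ ≤ ‖gradient f (x + t • u) - gradient f x‖ * ‖u‖ := h1
        _ ≤ L * (t * ‖u‖) * ‖u‖ := by
            apply mul_le_mul_of_nonneg_right h2 (norm_nonneg u)
        _ = L * ‖u‖ ^ 2 * t := by ring
    rw [inner_sub_left] at h3
    linarith
  have hint2 : IntervalIntegrable (fun t : ℝ => ⟪gradient f x, u⟫ + L * ‖u‖ ^ 2 * t)
      MeasureTheory.volume 0 1 := by
    apply Continuous.intervalIntegrable; continuity
  have hmono := intervalIntegral.integral_mono_on (by norm_num : (0:ℝ) ≤ 1) hint hint2 hbound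
  have hrhs : ∫ t in (0:ℝ)..1, (⟪gradient f x, u⟫ + L * ‖u‖ ^ 2 * t)
      = ⟪gradient f x, u⟫ + L / 2 * ‖u‖ ^ 2 := by
    rw [intervalIntegral.integral_add (by apply Continuous.intervalIntegrable; continuity)
      (by apply Continuous.intervalIntegrable; continuity)]
    rw [intervalIntegral.integral_const]
    rw [intervalIntegral.integral_const_mul, integral_id]
    norm_num; ring
  rw [heq] at hmono
  rw [hrhs] at hmono
  have hx1 : x + (1:ℝ) • u = y := by rw [hu]; module
  have hx0 : x + (0:ℝ) • u = x := by simp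
  rw [hx1, hx0] at hmono
  linarith

/-- cocoercivity-type bound for smooth convex functions -/
lemma aux_coco (f : E → ℝ) (L : ℝ) (hL : 0 < L) (hconv : ConvexOn ℝ Set.univ f)
    (hdiff : Differentiable ℝ f)
    (hlip : ∀ a b, ‖gradient f a - gradient f b‖ ≤ L * ‖a - b‖) (x y : E) :
    ‖gradient f x - gradient f y‖ ^ 2 ≤ 2 * L * (f x - f y - ⟪gradient f y, x - y⟫) := by
  set w := gradient f x - gradient f y with hw
  set z := x - (L⁻¹ : ℝ) • w with hz
  have h1 : f z ≤ f x + ⟪gradient f x, z - x⟫ + L / 2 * ‖z - x‖ ^ 2 :=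
    aux_descent f L hL hdiff hlip x z
  have h2 : f y + ⟪gradient f y, z - y⟫ ≤ f z := by
    have := aux_convex_grad f hconv hdiff y z
    linarith
  have hzx : z - x = -(L⁻¹ : ℝ) • w := by rw [hz]; module
  have hzy : z - y = (x - y) - (L⁻¹ : ℝ) • w := by rw [hz]; module
  have hLinv : (0:ℝ) < L⁻¹ := by positivity
  have e1 : ⟪gradient f x, z - x⟫ = -(L⁻¹) * ⟪gradient f x, w⟫ := by
    rw [hzx, real_inner_smul_right]
  have e2 : ‖z - x‖ ^ 2 = L⁻¹ ^ 2 * ‖w‖ ^ 2 := by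
    have : ‖z - x‖ = L⁻¹ * ‖w‖ := by
      rw [hzx, norm_smul, Real.norm_eq_abs, abs_neg, abs_of_pos hLinv]
    rw [this]; ring
  have e3 : ⟪gradient f y, z - y⟫ = ⟪gradient f y, x - y⟫ - L⁻¹ * ⟪gradient f y, w⟫ := by
    rw [hzy, inner_sub_right, real_inner_smul_right]
  have e4 : ⟪gradient f x, w⟫ - ⟪gradient f y, w⟫ = ‖w‖ ^ 2 := by
    rw [← inner_sub_left, hw, real_inner_self_eq_norm_sq]
  have hL2 : L / 2 * (L⁻¹ ^ 2 * ‖w‖ ^ 2) = 1 / (2 * L) * ‖w‖ ^ 2 := by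
    field_simp
  have hfin : 1 / (2 * L) * ‖w‖ ^ 2 ≤ f x - f y - ⟪gradient f y, x - y⟫ := by
    rw [e1, e2] at h1
    rw [e3] at h2
    have e4s : L⁻¹ * ⟪gradient f x, w⟫ - L⁻¹ * ⟪gradient f y, w⟫ = L⁻¹ * ‖w‖ ^ 2 := by
      rw [← mul_sub, e4]
    have hB : L⁻¹ * ‖w‖ ^ 2 - 1 / (2 * L) * ‖w‖ ^ 2 = 1 / (2 * L) * ‖w‖ ^ 2 := by
      field_simp; ring
    linarith [h1, h2, e4s, hB, hL2]
  have hww : ‖w‖ ^ 2 = 2 * L * (1 / (2 * L) * ‖w‖ ^ 2) := by field_simp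
  rw [hww]
  have h2L : (0:ℝ) ≤ 2 * L := by positivity
  exact mul_le_mul_of_nonneg_left hfin h2L

end Helpers3

section H5
variable {E : Type*} [NormedAddCommGroup E] [InnerProductSpace ℝ E]

lemma aux_var {n : ℕ} (hn : 0 < n) (u : Fin n → E) (G : E)
    (hG : G = (n:ℝ)⁻¹ • ∑ j, u j) : ∑ j, ‖u j - G‖ ^ 2 ≤ ∑ j, ‖u j‖ ^ 2 := by
  have hn0 : (n:ℝ) ≠ 0 := Nat.cast_ne_zero.2 hn.ne'
  have hsum : ∑ j, u j = (n:ℝ) • G := by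
    rw [hG, smul_smul, mul_inv_cancel₀ hn0, one_smul]
  have hexp : ∀ j, ‖u j - G‖ ^ 2 = ‖u j‖ ^ 2 - 2 * ⟪u j, G⟫ + ‖G‖ ^ 2 :=
    fun j => norm_sub_sq_real (u j) G
  calc ∑ j, ‖u j - G‖ ^ 2 = ∑ j, (‖u j‖ ^ 2 - 2 * ⟪u j, G⟫ + ‖G‖ ^ 2) :=
        Finset.sum_congr rfl fun j _ => hexp j
    _ = (∑ j, ‖u j‖ ^ 2) - 2 * ⟪∑ j, u j, G⟫ + (n:ℝ) * ‖G‖ ^ 2 := by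
        rw [Finset.sum_add_distrib, Finset.sum_sub_distrib, Finset.sum_const,
          Finset.card_univ, Fintype.card_fin, nsmul_eq_mul, sum_inner, Finset.mul_sum]
    _ = (∑ j, ‖u j‖ ^ 2) - 2 * ((n:ℝ) * ‖G‖ ^ 2) + (n:ℝ) * ‖G‖ ^ 2 := by
        rw [hsum, real_inner_smul_left, real_inner_self_eq_norm_sq]
    _ ≤ ∑ j, ‖u j‖ ^ 2 := by
        have : (0:ℝ) ≤ (n:ℝ) * ‖G‖ ^ 2 := by positivity
        linarith

lemma aux_two_point (p q r : E) : ‖p - q‖ ^ 2 ≤ 2 * ‖p - r‖ ^ 2 + 2 * ‖q - r‖ ^ 2 := by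
  have h1 : ‖p - q‖ ≤ ‖p - r‖ + ‖q - r‖ := by
    have := norm_sub_le (p - r) (q - r)
    simpa [sub_sub_sub_cancel_right] using this
  nlinarith [norm_nonneg (p - q), norm_nonneg (p - r), norm_nonneg (q - r), h1,
    sq_nonneg (‖p - r‖ - ‖q - r‖), sq_nonneg (‖p - r‖ + ‖q - r‖)]

end H5

section Fiber

variable {S m n : ℕ}

/-- splitting coordinate `(s,k)` out of `ω : Fin S → Fin m → Fin n` -/
noncomputable def ee (s : Fin S) (k : Fin m) (j : Fin n)
    (r : {q : Fin S × Fin m // q ≠ (s, k)} → Fin n) : Fin S → Fin m → Fin n :=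
  fun a b => (Equiv.funSplitAt ((s, k) : Fin S × Fin m) (Fin n)).symm (j, r) (a, b)

lemma ee_at (s : Fin S) (k : Fin m) (j : Fin n) (r : {q : Fin S × Fin m // q ≠ (s, k)} → Fin n) :
    ee s k j r s k = j := by
  simp [ee]

lemma ee_ne (s : Fin S) (k : Fin m) (j j' : Fin n)
    (r : {q : Fin S × Fin m // q ≠ (s, k)} → Fin n) (a : Fin S) (b : Fin m)
    (hab : (a, b) ≠ ((s, k) : Fin S × Fin m)) : ee s k j r a b = ee s k j' r a b := by
  have hne : ¬(a = s ∧ b = k) := by simpa [Prod.ext_iff] using hab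
  simp [ee, Equiv.funSplitAt_symm_apply, hne]

lemma fiber_sum (s : Fin S) (k : Fin m) (h : (Fin S → Fin m → Fin n) → ℝ) :
    ∑ ω : Fin S → Fin m → Fin n, h ω
      = ∑ r : {q : Fin S × Fin m // q ≠ (s, k)} → Fin n, ∑ j : Fin n, h (ee s k j r) := by
  rw [← Equiv.sum_comp ((Equiv.funSplitAt ((s, k) : Fin S × Fin m) (Fin n)).symm.trans
      (Equiv.curry (Fin S) (Fin m) (Fin n))) h, Fintype.sum_prod_type]
  rw [Finset.sum_comm]
  refine Finset.sum_congr rfl fun r _ => Finset.sum_congr rfl fun j _ => ?_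
  rfl

end Fiber

set_option maxHeartbeats 3000000 in
/-- linear convergence of VR-SGD (Option I) for strongly convex composite
objectives, under Assumption 3 (`E[F(x₀ˢ) − F(x*)] ≤ c·E[F(x̃ˢ⁻¹) − F(x*)]`) and
`ρ < 1`. Expectations are uniform averages over `ω : Fin S → Fin m → Fin n`. -/
theorem stmt_16 (d n m S : ℕ) (hn : 0 < n) (hm : 0 < m) (hS : 0 < S)
    (L μ η c ρ : ℝ) (hL : 0 < L) (hμ : 0 < μ) (hc : 0 < c)
    (hηpos : 0 < η) (hη3 : η < 1 / (3 * L))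
    (hρ : ρ = 2 * L * η * ((m : ℝ) + c) / ((m : ℝ) * (1 - 3 * L * η))
            + c * (1 - L * η) / ((m : ℝ) * μ * η * (1 - 3 * L * η)))
    (hρ1 : ρ < 1)
    (f : Fin n → EuclideanSpace ℝ (Fin d) → ℝ)
    (hconv : ∀ i, ConvexOn ℝ Set.univ (f i))
    (hdiff : ∀ i, Differentiable ℝ (f i))
    (hlip : ∀ i x y, ‖gradient (f i) x - gradient (f i) y‖ ≤ L * ‖x - y‖)
    (favg : EuclideanSpace ℝ (Fin d) → ℝ)
    (hfavg : ∀ x, favg x = (1 / n : ℝ) * ∑ i, f i x)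
    (g : EuclideanSpace ℝ (Fin d) → ℝ) (hgconv : ConvexOn ℝ Set.univ g)
    (F : EuclideanSpace ℝ (Fin d) → ℝ) (hF : ∀ x, F x = favg x + g x)
    (hsc : StrongConvexOn Set.univ μ F)
    (xstar : EuclideanSpace ℝ (Fin d)) (hmin : ∀ x, F xstar ≤ F x)
    (xt0 : EuclideanSpace ℝ (Fin d))
    (x : (Fin S → Fin m → Fin n) → ℕ → ℕ → EuclideanSpace ℝ (Fin d))
    (xt : (Fin S → Fin m → Fin n) → ℕ → EuclideanSpace ℝ (Fin d))
    (hxt0 : ∀ ω, xt ω 0 = xt0)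
    (hstart0 : ∀ ω, x ω 0 0 = xt0)
    (hstart : ∀ ω (s : ℕ), s + 1 < S → x ω (s + 1) 0 = x ω s m)
    (hstep : ∀ ω (s : Fin S) (k : Fin m), ∀ y,
      g (x ω (s : ℕ) ((k : ℕ) + 1))
          + ⟪gradient (f (ω s k)) (x ω (s : ℕ) (k : ℕ))
              - gradient (f (ω s k)) (xt ω (s : ℕ)) + gradient favg (xt ω (s : ℕ)),
            x ω (s : ℕ) ((k : ℕ) + 1)⟫
          + (1 / (2 * η)) * ‖x ω (s : ℕ) ((k : ℕ) + 1) - x ω (s : ℕ) (k : ℕ)‖ ^ 2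
        ≤ g y
          + ⟪gradient (f (ω s k)) (x ω (s : ℕ) (k : ℕ))
              - gradient (f (ω s k)) (xt ω (s : ℕ)) + gradient favg (xt ω (s : ℕ)), y⟫
          + (1 / (2 * η)) * ‖y - x ω (s : ℕ) (k : ℕ)‖ ^ 2)
    (hsnap : ∀ ω (s : Fin S),
      xt ω ((s : ℕ) + 1) = (1 / m : ℝ) • ∑ k ∈ Finset.range m, x ω (s : ℕ) (k + 1))
    (hassump3 : ∀ s : Fin S,
      (Fintype.card (Fin S → Fin m → Fin n) : ℝ)⁻¹ *
          ∑ ω : Fin S → Fin m → Fin n, (F (x ω (s : ℕ) 0) - F xstar)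
        ≤ c * ((Fintype.card (Fin S → Fin m → Fin n) : ℝ)⁻¹ *
            ∑ ω : Fin S → Fin m → Fin n, (F (xt ω (s : ℕ)) - F xstar)))
    (xhat : (Fin S → Fin m → Fin n) → EuclideanSpace ℝ (Fin d))
    (hout : ∀ ω,
      (F (xt ω S) ≤ F ((1 / S : ℝ) • ∑ s ∈ Finset.range S, xt ω (s + 1)) →
        xhat ω = xt ω S) ∧
      (¬ F (xt ω S) ≤ F ((1 / S : ℝ) • ∑ s ∈ Finset.range S, xt ω (s + 1)) →
        xhat ω = (1 / S : ℝ) • ∑ s ∈ Finset.range S, xt ω (s + 1))) :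
    (Fintype.card (Fin S → Fin m → Fin n) : ℝ)⁻¹ *
        ∑ ω : Fin S → Fin m → Fin n, (F (xhat ω) - F xstar)
      ≤ ρ ^ S * (F xt0 - F xstar) := by
  classical
  have hn0 : (n:ℝ) ≠ 0 := Nat.cast_ne_zero.2 hn.ne'
  have hm0 : (m:ℝ) ≠ 0 := Nat.cast_ne_zero.2 hm.ne'
  have hnpos : (0:ℝ) < n := Nat.cast_pos.2 hn
  have hmpos : (0:ℝ) < m := Nat.cast_pos.2 hm
  have hLη : L * η < 1/3 := by
    have := (mul_lt_mul_of_pos_left hη3 hL)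
    rwa [show L * (1/(3*L)) = 1/3 by field_simp] at this
  have h3p : (0:ℝ) < 1 - 3*L*η := by linarith
  have h2p : (0:ℝ) < 1 - L*η := by nlinarith [hηpos, hL]
  -- gradient of favg
  have hgradavg : ∀ z, HasGradientAt favg ((n:ℝ)⁻¹ • ∑ i, gradient (f i) z) z := by
    intro z
    have hsum : HasFDerivAt (fun w => ∑ i, f i w)
        (∑ i, (InnerProductSpace.toDual ℝ _) (gradient (f i) z)) z :=
      HasFDerivAt.fun_sum (fun i _ => ((hdiff i z).hasGradientAt).hasFDerivAt)
    have hmul : HasFDerivAt (fun w => (1/n:ℝ) * ∑ i, f i w)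
        ((1/n:ℝ) • ∑ i, (InnerProductSpace.toDual ℝ _) (gradient (f i) z)) z :=
      hsum.const_mul _
    have heqf : favg = fun w => (1/n:ℝ) * ∑ i, f i w := funext hfavg
    rw [← heqf] at hmul
    rw [hasGradientAt_iff_hasFDerivAt]
    refine hmul.congr_fderiv ?_
    rw [map_smul, map_sum]
    congr 1
    rw [one_div]
  have hgrad_eq : ∀ z, gradient favg z = (n:ℝ)⁻¹ • ∑ i, gradient (f i) z :=
    fun z => (hgradavg z).gradient
  have hdavg : Differentiable ℝ favg := fun z => (hgradavg z).differentiableAt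
  have hlipavg : ∀ a b, ‖gradient favg a - gradient favg b‖ ≤ L * ‖a - b‖ := by
    intro a b
    rw [hgrad_eq, hgrad_eq, ← smul_sub, ← Finset.sum_sub_distrib]
    rw [norm_smul]
    have h1 : ‖∑ i : Fin n, (gradient (f i) a - gradient (f i) b)‖
        ≤ ∑ i : Fin n, (L * ‖a - b‖) := by
      refine (norm_sum_le _ _).trans ?_
      exact Finset.sum_le_sum fun i _ => hlip i a b
    rw [Finset.sum_const, Finset.card_univ, Fintype.card_fin] at h1
    have : ‖((n:ℝ)⁻¹)‖ = (n:ℝ)⁻¹ := by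
      rw [Real.norm_eq_abs, abs_of_pos (by positivity)]
    rw [this]
    calc (n:ℝ)⁻¹ * ‖∑ i : Fin n, (gradient (f i) a - gradient (f i) b)‖
        ≤ (n:ℝ)⁻¹ * (n * (L * ‖a - b‖)) := by
          refine mul_le_mul_of_nonneg_left ?_ (by positivity)
          simpa [nsmul_eq_mul] using h1
      _ = L * ‖a - b‖ := by field_simp
  have hconvavg : ConvexOn ℝ Set.univ favg := by
    constructor
    · exact convex_univ
    · intro a _ b _ p q hp hq hpq
      rw [hfavg, hfavg, hfavg]
      have hsum : ∑ i, f i (p • a + q • b) ≤ ∑ i, (p * f i a + q * f i b) :=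
        Finset.sum_le_sum fun i _ => by
          simpa [smul_eq_mul] using (hconv i).2 (Set.mem_univ a) (Set.mem_univ b) hp hq hpq
      have hnn : (0:ℝ) ≤ 1/n := by positivity
      calc (1/n:ℝ) * ∑ i, f i (p • a + q • b) ≤ (1/n:ℝ) * ∑ i, (p * f i a + q * f i b) :=
            mul_le_mul_of_nonneg_left hsum hnn
        _ = p • ((1/n:ℝ) * ∑ i, f i a) + q • ((1/n:ℝ) * ∑ i, f i b) := by
            rw [Finset.sum_add_distrib, ← Finset.mul_sum, ← Finset.mul_sum]
            simp only [smul_eq_mul]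
            ring
  have hFconv : ConvexOn ℝ Set.univ F := by
    have := hsc.convexOn (fun r => by positivity)
    exact this
  have hFmin : ∀ z, 0 ≤ F z - F xstar := fun z => sub_nonneg.2 (hmin z)
  have hminfg : ∀ z, favg xstar + g xstar ≤ favg z + g z := by
    intro z; rw [← hF, ← hF]; exact hmin z
  have hdir : ∀ y, g xstar - g y ≤ ⟪gradient favg xstar, y - xstar⟫ :=
    aux_min_dir favg g hdavg hgconv xstar hminfg
  have hsum_grad : ∀ z : EuclideanSpace ℝ (Fin d),
      ∑ j, gradient (f j) z = (n:ℝ) • gradient favg z := by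
    intro z
    rw [hgrad_eq, smul_smul, mul_inv_cancel₀ hn0, one_smul]
  have hNE : Nonempty (Fin S → Fin m → Fin n) := ⟨fun _ _ => ⟨0, hn⟩⟩
  have hNpos : (0:ℝ) < (Fintype.card (Fin S → Fin m → Fin n) : ℝ) :=
    Nat.cast_pos.2 Fintype.card_pos
  -- cocoercivity averaged bound
  have hcoco_avg : ∀ z : EuclideanSpace ℝ (Fin d),
      ∑ j, ‖gradient (f j) z - gradient (f j) xstar‖ ^ 2 ≤ (n:ℝ) * (2 * L * (F z - F xstar)) := by
    intro z
    have hkey : favg z - favg xstar - ⟪gradient favg xstar, z - xstar⟫ ≤ F z - F xstar := by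
      have := hdir z
      rw [hF z, hF xstar]
      linarith
    have hsumg : (∑ j, gradient (f j) xstar) = (n:ℝ) • gradient favg xstar := by
      rw [hgrad_eq, smul_smul, mul_inv_cancel₀ hn0, one_smul]
    calc ∑ j, ‖gradient (f j) z - gradient (f j) xstar‖ ^ 2
        ≤ ∑ j, 2 * L * (f j z - f j xstar - ⟪gradient (f j) xstar, z - xstar⟫) :=
          Finset.sum_le_sum fun j _ => aux_coco (f j) L hL (hconv j) (hdiff j) (hlip j) z xstar
      _ = 2 * L * ((∑ j, f j z) - (∑ j, f j xstar) - ⟪∑ j, gradient (f j) xstar, z - xstar⟫) := by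
          rw [sum_inner, ← Finset.mul_sum]
          congr 1
          rw [← Finset.sum_sub_distrib, ← Finset.sum_sub_distrib]
      _ = (n:ℝ) * (2 * L * (favg z - favg xstar - ⟪gradient favg xstar, z - xstar⟫)) := by
          have e1 : (∑ j, f j z) = (n:ℝ) * favg z := by rw [hfavg]; field_simp
          have e2 : (∑ j, f j xstar) = (n:ℝ) * favg xstar := by rw [hfavg]; field_simp
          rw [e1, e2, hsumg, real_inner_smul_left]
          ring
      _ ≤ (n:ℝ) * (2 * L * (F z - F xstar)) := by
          refine mul_le_mul_of_nonneg_left ?_ hnpos.le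
          exact mul_le_mul_of_nonneg_left hkey (by positivity)
  -- determinism within an epoch
  have xk_eq : ∀ (sF : Fin S) (ω ω' : Fin S → Fin m → Fin n),
      xt ω (sF:ℕ) = xt ω' (sF:ℕ) → x ω (sF:ℕ) 0 = x ω' (sF:ℕ) 0 →
      ∀ kn : ℕ, kn ≤ m → (∀ k' : Fin m, (k':ℕ) < kn → ω sF k' = ω' sF k') →
        x ω (sF:ℕ) kn = x ω' (sF:ℕ) kn := by
    intro sF ω ω' hxteq hx0 kn
    induction kn with
    | zero => exact fun _ _ => hx0
    | succ kk ih =>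
      intro hkk hagr
      have hkm : kk < m := hkk
      have hxkk : x ω (sF:ℕ) kk = x ω' (sF:ℕ) kk :=
        ih (le_of_lt hkm) (fun k' h => hagr k' (Nat.lt_succ_of_lt h))
      have hidx : ω sF ⟨kk, hkm⟩ = ω' sF ⟨kk, hkm⟩ := hagr ⟨kk, hkm⟩ (Nat.lt_succ_self kk)
      have h1 := hstep ω sF ⟨kk, hkm⟩
      have h2 := hstep ω' sF ⟨kk, hkm⟩
      rw [show (((⟨kk, hkm⟩ : Fin m)):ℕ) = kk from rfl] at h1 h2
      rw [hidx, hxkk, hxteq] at h1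
      exact aux_prox_unique g hgconv η hηpos _ _ _ _ h1 h2
  -- determinism across epochs
  have start_det : ∀ (sn : ℕ), sn < S → ∀ (ω ω' : Fin S → Fin m → Fin n),
      (∀ (s' : Fin S) (k' : Fin m), (s':ℕ) < sn → ω s' k' = ω' s' k') →
      xt ω sn = xt ω' sn ∧ x ω sn 0 = x ω' sn 0 := by
    intro sn
    induction sn with
    | zero =>
      intro hsn ω ω' _
      exact ⟨by rw [hxt0, hxt0], by rw [hstart0, hstart0]⟩
    | succ sp ih =>
      intro hsn ω ω' hagree
      have hsp : sp < S := lt_trans (Nat.lt_succ_self sp) hsn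
      have ihh := ih hsp ω ω' (fun s' k' h => hagree s' k' (Nat.lt_succ_of_lt h))
      have hxall : ∀ kn : ℕ, kn ≤ m → x ω sp kn = x ω' sp kn := by
        intro kn hkn
        exact xk_eq ⟨sp, hsp⟩ ω ω' ihh.1 ihh.2 kn hkn
          (fun k' _ => hagree ⟨sp, hsp⟩ k' (Nat.lt_succ_self sp))
      constructor
      · have e1 := hsnap ω ⟨sp, hsp⟩
        have e2 := hsnap ω' ⟨sp, hsp⟩
        rw [show (((⟨sp, hsp⟩ : Fin S)):ℕ) = sp from rfl] at e1 e2
        rw [e1, e2]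
        congr 1
        refine Finset.sum_congr rfl fun kk hkk => ?_
        exact hxall (kk+1) (Nat.succ_le_of_lt (Finset.mem_range.1 hkk))
      · rw [hstart ω sp hsn, hstart ω' sp hsn]
        exact hxall m le_rfl
  -- main epoch recursion
  have hepoch : ∀ s : Fin S,
      (∑ ω : Fin S → Fin m → Fin n, (F (xt ω ((s:ℕ)+1)) - F xstar))
        ≤ ρ * ∑ ω : Fin S → Fin m → Fin n, (F (xt ω (s:ℕ)) - F xstar) := by
    intro s
    set Ts : ℝ := ∑ ω : Fin S → Fin m → Fin n, (F (xt ω (s:ℕ)) - F xstar) with hTs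
    set D : ℕ → ℝ := fun kn => ∑ ω : Fin S → Fin m → Fin n, (F (x ω (s:ℕ) kn) - F xstar)
      with hDdef
    set R : ℕ → ℝ := fun kn => ∑ ω : Fin S → Fin m → Fin n, ‖xstar - x ω (s:ℕ) kn‖ ^ 2
      with hRdef
    set α : ℝ := 2*L*η/(1-L*η) with hα
    have hα0 : 0 ≤ α := by
      rw [hα]
      exact div_nonneg (by nlinarith [hL.le, hηpos.le]) h2p.le
    have h1α : (0:ℝ) < 1 - α := by
      rw [hα, show (1:ℝ) - 2*L*η/(1-L*η) = (1-3*L*η)/(1-L*η) by field_simp; ring]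
      exact div_pos h3p h2p
    have hTs0 : 0 ≤ Ts := by
      rw [hTs]; exact Finset.sum_nonneg fun ω _ => hFmin _
    have hDnn : ∀ kn : ℕ, 0 ≤ D kn := by
      intro kn; rw [hDdef]; exact Finset.sum_nonneg fun ω _ => hFmin _
    have hRnn : ∀ kn : ℕ, 0 ≤ R kn := by
      intro kn; rw [hRdef]; exact Finset.sum_nonneg fun ω _ => sq_nonneg _
    -- the per-inner-iteration bound
    have hstepb : ∀ k : Fin m, D ((k:ℕ)+1) ≤ α * (D (k:ℕ) + Ts)
        + 1/(2*η) * (R (k:ℕ) - R ((k:ℕ)+1)) := by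
      intro k
      set Δf : (Fin S → Fin m → Fin n) → EuclideanSpace ℝ (Fin d) := fun ω =>
        gradient (f (ω s k)) (x ω (s:ℕ) (k:ℕ)) - gradient (f (ω s k)) (xt ω (s:ℕ))
          + gradient favg (xt ω (s:ℕ)) - gradient favg (x ω (s:ℕ) (k:ℕ)) with hΔf
      -- pointwise inequality
      have perom : ∀ ω, F (x ω (s:ℕ) ((k:ℕ)+1)) - F xstar
          ≤ η/(2*(1-L*η)) * ‖Δf ω‖^2 + ⟪Δf ω, xstar - x ω (s:ℕ) (k:ℕ)⟫
            + 1/(2*η) * (‖xstar - x ω (s:ℕ) (k:ℕ)‖^2 - ‖xstar - x ω (s:ℕ) ((k:ℕ)+1)‖^2) := by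
        intro ω
        simp only [hΔf]
        have hps := aux_prox_strong g hgconv η hηpos _ _ _ (hstep ω s k) xstar
        have hv : gradient (f (ω s k)) (x ω (s:ℕ) (k:ℕ)) - gradient (f (ω s k)) (xt ω (s:ℕ))
            + gradient favg (xt ω (s:ℕ))
            = (gradient (f (ω s k)) (x ω (s:ℕ) (k:ℕ)) - gradient (f (ω s k)) (xt ω (s:ℕ))
              + gradient favg (xt ω (s:ℕ)) - gradient favg (x ω (s:ℕ) (k:ℕ)))
              + gradient favg (x ω (s:ℕ) (k:ℕ)) := by abel
        rw [hv] at hps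
        simp only [inner_add_left] at hps
        have h2 := aux_descent favg L hL hdavg hlipavg (x ω (s:ℕ) (k:ℕ)) (x ω (s:ℕ) ((k:ℕ)+1))
        have h3 := aux_convex_grad favg hconvavg hdavg (x ω (s:ℕ) (k:ℕ)) xstar
        have h4 := aux_young
          (gradient (f (ω s k)) (x ω (s:ℕ) (k:ℕ)) - gradient (f (ω s k)) (xt ω (s:ℕ))
            + gradient favg (xt ω (s:ℕ)) - gradient favg (x ω (s:ℕ) (k:ℕ)))
          (x ω (s:ℕ) (k:ℕ) - x ω (s:ℕ) ((k:ℕ)+1)) (η/(1-L*η)) (div_pos hηpos h2p)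
        rw [show η/(1-L*η)/2 = η/(2*(1-L*η)) by rw [div_div, mul_comm]] at h4
        rw [show 1/(2*(η/(1-L*η))) = (1-L*η)/(2*η) by
          have h2ne : (1-L*η) ≠ 0 := ne_of_gt h2p
          have hηne : η ≠ 0 := hηpos.ne'
          field_simp] at h4
        rw [show ‖x ω (s:ℕ) (k:ℕ) - x ω (s:ℕ) ((k:ℕ)+1)‖
            = ‖x ω (s:ℕ) ((k:ℕ)+1) - x ω (s:ℕ) (k:ℕ)‖ from norm_sub_rev _ _] at h4
        simp only [inner_sub_right] at hps h2 h3 h4 ⊢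
        have c3' : L/2 * ‖x ω (s:ℕ) ((k:ℕ)+1) - x ω (s:ℕ) (k:ℕ)‖^2
            + (1-L*η)/(2*η) * ‖x ω (s:ℕ) ((k:ℕ)+1) - x ω (s:ℕ) (k:ℕ)‖^2
            - 1/(2*η) * ‖x ω (s:ℕ) ((k:ℕ)+1) - x ω (s:ℕ) (k:ℕ)‖^2 = 0 := by
          field_simp
          ring
        have hFb := hF (x ω (s:ℕ) ((k:ℕ)+1))
        have hFxs := hF xstar
        linarith [hps, h2, h3, h4, c3', hFb, hFxs]
      -- invariance
      have hinv : ∀ (j j' : Fin n) (r : {q : Fin S × Fin m // q ≠ (s, k)} → Fin n),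
          x (ee s k j r) (s:ℕ) (k:ℕ) = x (ee s k j' r) (s:ℕ) (k:ℕ)
            ∧ xt (ee s k j r) (s:ℕ) = xt (ee s k j' r) (s:ℕ) := by
        intro j j' r
        have hagree : ∀ (s' : Fin S) (k' : Fin m), (s':ℕ) < (s:ℕ) →
            ee s k j r s' k' = ee s k j' r s' k' := by
          intro s' k' hlt
          refine ee_ne s k j j' r s' k' ?_
          intro hq
          rw [Prod.mk.injEq] at hq
          rw [hq.1] at hlt
          exact lt_irrefl _ hlt
        have hsd := start_det (s:ℕ) s.isLt _ _ hagree
        refine ⟨?_, hsd.1⟩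
        refine xk_eq s _ _ hsd.1 hsd.2 (k:ℕ) (le_of_lt k.isLt) ?_
        intro k' hk'
        refine ee_ne s k j j' r s k' ?_
        intro hq
        rw [Prod.mk.injEq] at hq
        rw [hq.2] at hk'
        exact lt_irrefl _ hk'
      have j0 : Fin n := ⟨0, hn⟩
      -- expectation of the cross term vanishes
      have hE1 : (∑ ω : Fin S → Fin m → Fin n, ⟪Δf ω, xstar - x ω (s:ℕ) (k:ℕ)⟫) = 0 := by
        rw [fiber_sum s k (fun ω => ⟪Δf ω, xstar - x ω (s:ℕ) (k:ℕ)⟫)]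
        refine Finset.sum_eq_zero fun r _ => ?_
        have hterm : ∀ j : Fin n, ⟪Δf (ee s k j r), xstar - x (ee s k j r) (s:ℕ) (k:ℕ)⟫
            = ⟪gradient (f j) (x (ee s k j0 r) (s:ℕ) (k:ℕ))
                - gradient (f j) (xt (ee s k j0 r) (s:ℕ))
                + gradient favg (xt (ee s k j0 r) (s:ℕ))
                - gradient favg (x (ee s k j0 r) (s:ℕ) (k:ℕ)),
                xstar - x (ee s k j0 r) (s:ℕ) (k:ℕ)⟫ := by
          intro j
          have h1 := (hinv j j0 r).1
          have h2 := (hinv j j0 r).2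
          simp only [hΔf]
          rw [ee_at s k j r, h1, h2]
        rw [Finset.sum_congr rfl fun j _ => hterm j, ← sum_inner]
        have hz : ∑ j : Fin n, (gradient (f j) (x (ee s k j0 r) (s:ℕ) (k:ℕ))
            - gradient (f j) (xt (ee s k j0 r) (s:ℕ))
            + gradient favg (xt (ee s k j0 r) (s:ℕ))
            - gradient favg (x (ee s k j0 r) (s:ℕ) (k:ℕ))) = 0 := by
          simp only [Finset.sum_sub_distrib, Finset.sum_add_distrib, Finset.sum_const,
            Finset.card_univ, Fintype.card_fin]
          rw [hsum_grad, hsum_grad]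
          rw [← Nat.cast_smul_eq_nsmul ℝ n (gradient favg (xt (ee s k j0 r) (s:ℕ))),
            ← Nat.cast_smul_eq_nsmul ℝ n (gradient favg (x (ee s k j0 r) (s:ℕ) (k:ℕ)))]
          abel
        rw [hz, inner_zero_left]
      -- expectation of the squared norm
      have hE2 : (∑ ω : Fin S → Fin m → Fin n, ‖Δf ω‖^2)
          ≤ ∑ ω : Fin S → Fin m → Fin n,
            (4*L*((F (x ω (s:ℕ) (k:ℕ)) - F xstar) + (F (xt ω (s:ℕ)) - F xstar))) := by
        rw [fiber_sum s k (fun ω => ‖Δf ω‖^2),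
          fiber_sum s k (fun ω =>
            4*L*((F (x ω (s:ℕ) (k:ℕ)) - F xstar) + (F (xt ω (s:ℕ)) - F xstar)))]
        refine Finset.sum_le_sum fun r _ => ?_
        have hterm : ∀ j : Fin n, Δf (ee s k j r)
            = (gradient (f j) (x (ee s k j0 r) (s:ℕ) (k:ℕ))
                - gradient (f j) (xt (ee s k j0 r) (s:ℕ)))
              - (gradient favg (x (ee s k j0 r) (s:ℕ) (k:ℕ))
                - gradient favg (xt (ee s k j0 r) (s:ℕ))) := by
          intro j
          have h1 := (hinv j j0 r).1
          have h2 := (hinv j j0 r).2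
          simp only [hΔf]
          rw [ee_at s k j r, h1, h2]
          abel
        have hterm2 : ∀ j : Fin n,
            4*L*((F (x (ee s k j r) (s:ℕ) (k:ℕ)) - F xstar)
              + (F (xt (ee s k j r) (s:ℕ)) - F xstar))
            = 4*L*((F (x (ee s k j0 r) (s:ℕ) (k:ℕ)) - F xstar)
              + (F (xt (ee s k j0 r) (s:ℕ)) - F xstar)) := by
          intro j
          rw [(hinv j j0 r).1, (hinv j j0 r).2]
        have hGmean : gradient favg (x (ee s k j0 r) (s:ℕ) (k:ℕ))
              - gradient favg (xt (ee s k j0 r) (s:ℕ))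
            = (n:ℝ)⁻¹ • ∑ j : Fin n, (gradient (f j) (x (ee s k j0 r) (s:ℕ) (k:ℕ))
                - gradient (f j) (xt (ee s k j0 r) (s:ℕ))) := by
          rw [hgrad_eq, hgrad_eq, ← smul_sub, ← Finset.sum_sub_distrib]
        calc ∑ j : Fin n, ‖Δf (ee s k j r)‖^2
            = ∑ j : Fin n, ‖(gradient (f j) (x (ee s k j0 r) (s:ℕ) (k:ℕ))
                - gradient (f j) (xt (ee s k j0 r) (s:ℕ)))
              - (gradient favg (x (ee s k j0 r) (s:ℕ) (k:ℕ))
                - gradient favg (xt (ee s k j0 r) (s:ℕ)))‖^2 :=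
              Finset.sum_congr rfl fun j _ => by rw [hterm j]
          _ ≤ ∑ j : Fin n, ‖gradient (f j) (x (ee s k j0 r) (s:ℕ) (k:ℕ))
                - gradient (f j) (xt (ee s k j0 r) (s:ℕ))‖^2 :=
              aux_var hn _ _ hGmean
          _ ≤ ∑ j : Fin n, (2*‖gradient (f j) (x (ee s k j0 r) (s:ℕ) (k:ℕ))
                - gradient (f j) xstar‖^2
              + 2*‖gradient (f j) (xt (ee s k j0 r) (s:ℕ)) - gradient (f j) xstar‖^2) :=
              Finset.sum_le_sum fun j _ => aux_two_point _ _ _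
          _ ≤ (n:ℝ) * (4*L*((F (x (ee s k j0 r) (s:ℕ) (k:ℕ)) - F xstar)
                + (F (xt (ee s k j0 r) (s:ℕ)) - F xstar))) := by
              rw [Finset.sum_add_distrib, ← Finset.mul_sum, ← Finset.mul_sum]
              have c1 := hcoco_avg (x (ee s k j0 r) (s:ℕ) (k:ℕ))
              have c2 := hcoco_avg (xt (ee s k j0 r) (s:ℕ))
              nlinarith [c1, c2]
          _ = ∑ j : Fin n, (4*L*((F (x (ee s k j r) (s:ℕ) (k:ℕ)) - F xstar)
                + (F (xt (ee s k j r) (s:ℕ)) - F xstar))) := by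
              rw [Finset.sum_congr rfl fun j _ => hterm2 j]
              rw [Finset.sum_const, Finset.card_univ, Fintype.card_fin, nsmul_eq_mul]
      -- sum the pointwise inequality
      have hsum1 : D ((k:ℕ)+1)
          ≤ η/(2*(1-L*η)) * (∑ ω : Fin S → Fin m → Fin n, ‖Δf ω‖^2)
            + (∑ ω : Fin S → Fin m → Fin n, ⟪Δf ω, xstar - x ω (s:ℕ) (k:ℕ)⟫)
            + 1/(2*η) * (R (k:ℕ) - R ((k:ℕ)+1)) := by
        simp only [hDdef, hRdef]
        calc ∑ ω : Fin S → Fin m → Fin n, (F (x ω (s:ℕ) ((k:ℕ)+1)) - F xstar)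
            ≤ ∑ ω : Fin S → Fin m → Fin n, (η/(2*(1-L*η)) * ‖Δf ω‖^2
              + ⟪Δf ω, xstar - x ω (s:ℕ) (k:ℕ)⟫
              + 1/(2*η) * (‖xstar - x ω (s:ℕ) (k:ℕ)‖^2 - ‖xstar - x ω (s:ℕ) ((k:ℕ)+1)‖^2)) :=
              Finset.sum_le_sum fun ω _ => perom ω
          _ = η/(2*(1-L*η)) * (∑ ω : Fin S → Fin m → Fin n, ‖Δf ω‖^2)
              + (∑ ω : Fin S → Fin m → Fin n, ⟪Δf ω, xstar - x ω (s:ℕ) (k:ℕ)⟫)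
              + 1/(2*η) * ((∑ ω : Fin S → Fin m → Fin n, ‖xstar - x ω (s:ℕ) (k:ℕ)‖^2)
                - ∑ ω : Fin S → Fin m → Fin n, ‖xstar - x ω (s:ℕ) ((k:ℕ)+1)‖^2) := by
              rw [Finset.sum_add_distrib, Finset.sum_add_distrib, ← Finset.mul_sum,
                ← Finset.mul_sum, Finset.sum_sub_distrib]
      have hqsum : (∑ ω : Fin S → Fin m → Fin n,
            (4*L*((F (x ω (s:ℕ) (k:ℕ)) - F xstar) + (F (xt ω (s:ℕ)) - F xstar))))
          = 4*L*(D (k:ℕ) + Ts) := by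
        simp only [hDdef, hTs]
        rw [← Finset.mul_sum, Finset.sum_add_distrib]
      have hc1 : (0:ℝ) ≤ η/(2*(1-L*η)) := le_of_lt (div_pos hηpos (by linarith))
      have h5 : η/(2*(1-L*η)) * (∑ ω : Fin S → Fin m → Fin n, ‖Δf ω‖^2)
          ≤ η/(2*(1-L*η)) * (4*L*(D (k:ℕ) + Ts)) :=
        mul_le_mul_of_nonneg_left (le_of_le_of_eq hE2 hqsum) hc1
      have h6 : η/(2*(1-L*η)) * (4*L*(D (k:ℕ) + Ts)) = α * (D (k:ℕ) + Ts) := by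
        rw [hα]
        field_simp
        ring
      linarith [hsum1, hE1, h5, h6]
    -- telescoping over the epoch
    have htele : ∑ kn ∈ Finset.range m, (R kn - R (kn+1)) = R 0 - R m :=
      Finset.sum_range_sub' R m
    have hsumk : (∑ kn ∈ Finset.range m, D (kn+1))
        ≤ α * (∑ kn ∈ Finset.range m, D kn) + α * m * Ts + 1/(2*η) * (R 0 - R m) := by
      calc (∑ kn ∈ Finset.range m, D (kn+1))
          ≤ ∑ kn ∈ Finset.range m, (α * (D kn + Ts) + 1/(2*η) * (R kn - R (kn+1))) := by
            refine Finset.sum_le_sum fun kn hkn => ?_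
            exact hstepb ⟨kn, Finset.mem_range.1 hkn⟩
        _ = α * (∑ kn ∈ Finset.range m, D kn) + α * m * Ts + 1/(2*η) * (R 0 - R m) := by
            rw [Finset.sum_add_distrib]
            congr 1
            · rw [← Finset.mul_sum, Finset.sum_add_distrib, Finset.sum_const,
                Finset.card_range, nsmul_eq_mul, mul_add]
              ring
            · rw [← Finset.mul_sum, htele]
    have hshift : (∑ kn ∈ Finset.range m, D kn)
        = (∑ kn ∈ Finset.range m, D (kn+1)) + D 0 - D m := by
      have e1 := Finset.sum_range_succ' D m
      have e2 := Finset.sum_range_succ D m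
      rw [e1] at e2
      linarith [e2]
    have hgrow : R 0 ≤ 2/μ * D 0 := by
      simp only [hRdef, hDdef]
      rw [Finset.mul_sum]
      refine Finset.sum_le_sum fun ω _ => ?_
      have hg := aux_strong_growth F μ hμ hsc xstar hmin (x ω (s:ℕ) 0)
      rw [norm_sub_rev xstar _]
      have hμ2 : (2/μ) * (μ/2 * ‖x ω (s:ℕ) 0 - xstar‖^2) = ‖x ω (s:ℕ) 0 - xstar‖^2 := by
        field_simp
      calc ‖x ω (s:ℕ) 0 - xstar‖^2 = (2/μ) * (μ/2 * ‖x ω (s:ℕ) 0 - xstar‖^2) := hμ2.symm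
        _ ≤ 2/μ * (F (x ω (s:ℕ) 0) - F xstar) :=
            mul_le_mul_of_nonneg_left hg (by positivity)
    have hass : D 0 ≤ c * Ts := by
      have h := hassump3 s
      have h2 := mul_le_mul_of_nonneg_left h hNpos.le
      simp only [hDdef, hTs]
      calc (∑ ω : Fin S → Fin m → Fin n, (F (x ω (s:ℕ) 0) - F xstar))
          = (Fintype.card (Fin S → Fin m → Fin n) : ℝ)
            * ((Fintype.card (Fin S → Fin m → Fin n) : ℝ)⁻¹
              * ∑ ω : Fin S → Fin m → Fin n, (F (x ω (s:ℕ) 0) - F xstar)) := by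
            rw [← mul_assoc, mul_inv_cancel₀ hNpos.ne', one_mul]
        _ ≤ (Fintype.card (Fin S → Fin m → Fin n) : ℝ)
            * (c * ((Fintype.card (Fin S → Fin m → Fin n) : ℝ)⁻¹
              * ∑ ω : Fin S → Fin m → Fin n, (F (xt ω (s:ℕ)) - F xstar))) := h2
        _ = c * ∑ ω : Fin S → Fin m → Fin n, (F (xt ω (s:ℕ)) - F xstar) := by
            field_simp
    have hA : (1 - α) * (∑ kn ∈ Finset.range m, D (kn+1))
        ≤ (α*c + α*(m:ℝ) + c/(μ*η)) * Ts := by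
      have h7 : α * D 0 ≤ α * (c * Ts) := mul_le_mul_of_nonneg_left hass hα0
      have h8 : R 0 ≤ 2/μ * (c * Ts) :=
        hgrow.trans (mul_le_mul_of_nonneg_left hass (le_of_lt (div_pos two_pos hμ)))
      have hc2 : (0:ℝ) < 1/(2*η) := by
        apply div_pos one_pos; linarith
      have h9 : 1/(2*η) * R 0 ≤ 1/(2*η) * (2/μ * (c * Ts)) :=
        mul_le_mul_of_nonneg_left h8 hc2.le
      have h10 : 1/(2*η) * (2/μ * (c * Ts)) = c/(μ*η) * Ts := by
        field_simp
      have h11 : α * (∑ kn ∈ Finset.range m, D kn)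
          = α * ((∑ kn ∈ Finset.range m, D (kn+1)) + D 0 - D m) := by rw [hshift]
      have h12 : 0 ≤ α * D m := mul_nonneg hα0 (hDnn m)
      have h13 : 0 ≤ 1/(2*η) * R m := mul_nonneg hc2.le (hRnn m)
      nlinarith [hsumk, h7, h9, h10, h11, h12, h13]
    -- Jensen step
    have hjen : (∑ ω : Fin S → Fin m → Fin n, (F (xt ω ((s:ℕ)+1)) - F xstar))
        ≤ (1/m:ℝ) * ∑ kn ∈ Finset.range m, D (kn+1) := by
      have hper : ∀ ω, F (xt ω ((s:ℕ)+1)) - F xstar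
          ≤ ∑ kn ∈ Finset.range m, (1/m:ℝ) * (F (x ω (s:ℕ) (kn+1)) - F xstar) := by
        intro ω
        have hw0 : ∀ kn ∈ Finset.range m, (0:ℝ) ≤ (1/m:ℝ) := fun _ _ => by positivity
        have hw1 : ∑ _kn ∈ Finset.range m, (1/m:ℝ) = 1 := by
          rw [Finset.sum_const, Finset.card_range, nsmul_eq_mul]
          field_simp
        have hmem : ∀ kn ∈ Finset.range m, x ω (s:ℕ) (kn+1) ∈ Set.univ := fun _ _ => trivial
        have hj := hFconv.map_sum_le hw0 hw1 hmem
        rw [hsnap ω s, Finset.smul_sum]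
        have hrhs : ∑ kn ∈ Finset.range m, (1/m:ℝ) * (F (x ω (s:ℕ) (kn+1)) - F xstar)
            = (∑ kn ∈ Finset.range m, (1/m:ℝ) * F (x ω (s:ℕ) (kn+1))) - F xstar := by
          simp only [mul_sub]
          rw [Finset.sum_sub_distrib, ← Finset.sum_mul, hw1, one_mul]
        rw [hrhs]
        have : F (∑ kn ∈ Finset.range m, (1/m:ℝ) • x ω (s:ℕ) (kn+1))
            ≤ ∑ kn ∈ Finset.range m, (1/m:ℝ) * F (x ω (s:ℕ) (kn+1)) := by
          simpa [smul_eq_mul] using hj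
        linarith [this]
      calc (∑ ω : Fin S → Fin m → Fin n, (F (xt ω ((s:ℕ)+1)) - F xstar))
          ≤ ∑ ω : Fin S → Fin m → Fin n,
            ∑ kn ∈ Finset.range m, (1/m:ℝ) * (F (x ω (s:ℕ) (kn+1)) - F xstar) :=
            Finset.sum_le_sum fun ω _ => hper ω
        _ = (1/m:ℝ) * ∑ kn ∈ Finset.range m, D (kn+1) := by
            rw [Finset.sum_comm]
            simp only [hDdef]
            rw [Finset.mul_sum]
            refine Finset.sum_congr rfl fun kn _ => ?_
            rw [← Finset.mul_sum]
    -- combine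
    have hKρ : α*c + α*(m:ℝ) + c/(μ*η) = ρ * ((m:ℝ)*(1-α)) := by
      rw [hρ, hα]
      have h3ne : (1 - 3*L*η) ≠ 0 := h3p.ne'
      have h2ne : (1 - L*η) ≠ 0 := h2p.ne'
      have h3ne' : (1 - L*η*3) ≠ 0 := ne_of_gt (by linarith)
      field_simp
      ring
    have hfin1 : ((m:ℝ)*(1-α)) * (∑ ω : Fin S → Fin m → Fin n, (F (xt ω ((s:ℕ)+1)) - F xstar))
        ≤ ((m:ℝ)*(1-α)) * (ρ * Ts) := by
      have s1 : ((m:ℝ)*(1-α)) * (∑ ω : Fin S → Fin m → Fin n, (F (xt ω ((s:ℕ)+1)) - F xstar))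
          ≤ ((m:ℝ)*(1-α)) * ((1/m:ℝ) * ∑ kn ∈ Finset.range m, D (kn+1)) :=
        mul_le_mul_of_nonneg_left hjen (mul_nonneg hmpos.le h1α.le)
      have s2 : ((m:ℝ)*(1-α)) * ((1/m:ℝ) * ∑ kn ∈ Finset.range m, D (kn+1))
          = (1-α) * ∑ kn ∈ Finset.range m, D (kn+1) := by
        field_simp
      have s3 := hA
      rw [hKρ] at s3
      nlinarith [s1, s2, s3]
    exact (mul_le_mul_iff_of_pos_left (mul_pos hmpos h1α)).1 hfin1
  -- conclude
  have hρ0 : 0 ≤ ρ := by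
    rw [hρ]
    have h1 : 0 ≤ 2 * L * η * ((m : ℝ) + c) / ((m : ℝ) * (1 - 3 * L * η)) := by
      apply div_nonneg
      · positivity
      · positivity
    have h2 : 0 ≤ c * (1 - L * η) / ((m : ℝ) * μ * η * (1 - 3 * L * η)) := by
      apply div_nonneg
      · positivity
      · positivity
    linarith
  have hT0 : (∑ ω : Fin S → Fin m → Fin n, (F (xt ω 0) - F xstar))
      = (Fintype.card (Fin S → Fin m → Fin n) : ℝ) * (F xt0 - F xstar) := by
    simp only [hxt0]
    rw [Finset.sum_const, Finset.card_univ, nsmul_eq_mul]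
  have hTle : ∀ s : ℕ, s ≤ S →
      (∑ ω : Fin S → Fin m → Fin n, (F (xt ω s) - F xstar))
        ≤ ρ ^ s * ∑ ω : Fin S → Fin m → Fin n, (F (xt ω 0) - F xstar) := by
    intro s
    induction s with
    | zero => intro _; simp
    | succ sp ih =>
      intro hsp
      have hspS : sp < S := hsp
      have h1 := hepoch ⟨sp, hspS⟩
      rw [show (((⟨sp, hspS⟩ : Fin S)):ℕ) = sp from rfl] at h1
      have h2 := ih (le_of_lt hspS)
      calc (∑ ω : Fin S → Fin m → Fin n, (F (xt ω (sp+1)) - F xstar))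
          ≤ ρ * ∑ ω : Fin S → Fin m → Fin n, (F (xt ω sp) - F xstar) := h1
        _ ≤ ρ * (ρ ^ sp * ∑ ω : Fin S → Fin m → Fin n, (F (xt ω 0) - F xstar)) :=
            mul_le_mul_of_nonneg_left h2 hρ0
        _ = ρ ^ (sp+1) * ∑ ω : Fin S → Fin m → Fin n, (F (xt ω 0) - F xstar) := by ring
  have hxhat : ∀ ω, F (xhat ω) ≤ F (xt ω S) := by
    intro ω
    by_cases hle : F (xt ω S) ≤ F ((1 / S : ℝ) • ∑ s ∈ Finset.range S, xt ω (s + 1))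
    · rw [(hout ω).1 hle]
    · rw [(hout ω).2 hle]
      exact (not_le.1 hle).le
  have hfinal := hTle S le_rfl
  rw [hT0] at hfinal
  calc (Fintype.card (Fin S → Fin m → Fin n) : ℝ)⁻¹ *
        ∑ ω : Fin S → Fin m → Fin n, (F (xhat ω) - F xstar)
      ≤ (Fintype.card (Fin S → Fin m → Fin n) : ℝ)⁻¹ *
        ∑ ω : Fin S → Fin m → Fin n, (F (xt ω S) - F xstar) := by
        refine mul_le_mul_of_nonneg_left ?_ (inv_nonneg.2 hNpos.le)
        exact Finset.sum_le_sum fun ω _ => by linarith [hxhat ω]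
    _ ≤ (Fintype.card (Fin S → Fin m → Fin n) : ℝ)⁻¹ *
        (ρ ^ S * ((Fintype.card (Fin S → Fin m → Fin n) : ℝ) * (F xt0 - F xstar))) :=
        mul_le_mul_of_nonneg_left hfinal (inv_nonneg.2 hNpos.le)
    _ = ρ ^ S * (F xt0 - F xstar) := by
        field_simp
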